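/- Let x, y and z be odd positive integers (so that all three have the same parity) and let a_1,…,a_k be non-negative integers. Then the centrally symmetric region FC_{x,y,z}(a_1,…,a_k,a_k,…,a_1) has no centrally symmetric lozenge tilings, i.e. M_⊙(FC_{x,y,z}(a_1,…,a_k,a_k,…,a_1)) = 0; in other words, x, y and z must be even in order for this region to have any centrally symmetric lozenge tilings. -/

import Mathlib

/-!
Lozenge tilings on the triangular lattice.

A point `(u, v) : ℤ × ℤ` of the lattice denotes the point `u·(1,0) + v·(1/2, √3/2)`
of the plane, so the three families of lattice lines are `v = const` (horizontal),
`u = const` (polar direction π/3) and `u + v = const` (polar direction -π/3).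

A unit triangle is encoded as `(u, v, b) : ℤ × ℤ × Bool`, where `b = true` denotes
the up-pointing triangle with vertices `(u,v), (u+1,v), (u,v+1)` and `b = false`
denotes the down-pointing triangle with vertices `(u+1,v), (u,v+1), (u+1,v+1)`.
-/

/-- A unit triangle of the triangular lattice. -/
abbrev Tri : Type := ℤ × ℤ × Bool

namespace Fern

/-- Two unit triangles share an edge (i.e. their union is a lozenge). -/
def Adj (s t : Tri) : Prop :=
  (s.2.2 = true ∧ t.2.2 = false ∧
    ((t.1 = s.1 ∧ t.2.1 = s.2.1) ∨ (t.1 = s.1 - 1 ∧ t.2.1 = s.2.1) ∨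
      (t.1 = s.1 ∧ t.2.1 = s.2.1 - 1))) ∨
  (s.2.2 = false ∧ t.2.2 = true ∧
    ((s.1 = t.1 ∧ s.2.1 = t.2.1) ∨ (s.1 = t.1 - 1 ∧ s.2.1 = t.2.1) ∨
      (s.1 = t.1 ∧ s.2.1 = t.2.1 - 1)))

/-- A lozenge tiling of the region `R` (a set of unit triangles), encoded as the
function matching each unit triangle of `R` with the one it forms a lozenge with
(and fixing everything outside `R`). -/
structure Tiling (R : Set Tri) where
  mate : Tri → Tri
  mate_mem : ∀ t ∈ R, mate t ∈ R
  adj_mate : ∀ t ∈ R, Adj t (mate t)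
  mate_mate : ∀ t ∈ R, mate (mate t) = t
  mate_eq_self : ∀ t, t ∉ R → mate t = t

/-- `M R` is the number of lozenge tilings of the region `R`. -/
noncomputable def M (R : Set Tri) : ℕ := Nat.card (Tiling R)

/-- The 180° rotation about the point whose doubled coordinates are `(cu, cv)`,
i.e. about the point `(cu/2, cv/2)`. -/
def rot (cu cv : ℤ) (t : Tri) : Tri := (cu - t.1 - 1, cv - t.2.1 - 1, !t.2.2)

/-- `Msym R cu cv` is the number of lozenge tilings of `R` invariant under the
180° rotation about the point `(cu/2, cv/2)` (the center of the region). -/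
noncomputable def Msym (R : Set Tri) (cu cv : ℤ) : ℕ :=
  Nat.card {T : Tiling R // ∀ t ∈ R, T.mate (rot cu cv t) = rot cu cv (T.mate t)}

/-- The (possibly degenerate) hexagonal region consisting of the unit triangles all
of whose vertices `(u,v)` satisfy `umin ≤ u ≤ umax`, `vmin ≤ v ≤ vmax` and
`wmin ≤ u + v ≤ wmax`. -/
def hexSet (umin umax vmin vmax wmin wmax : ℤ) : Set Tri :=
  {t : Tri | umin ≤ t.1 ∧ t.1 + 1 ≤ umax ∧ vmin ≤ t.2.1 ∧ t.2.1 + 1 ≤ vmax ∧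
    (if t.2.2 = true then wmin ≤ t.1 + t.2.1 ∧ t.1 + t.2.1 + 1 ≤ wmax
      else wmin ≤ t.1 + t.2.1 + 1 ∧ t.1 + t.2.1 + 2 ≤ wmax)}

/-- The up-pointing lattice triangle (lobe) of size `a` whose left vertex is `(p, q)`
(vertices `(p,q)`, `(p+a,q)`, `(p,q+a)`). -/
def upLobe (a : ℕ) (p q : ℤ) : Set Tri :=
  hexSet p (p + a) q (q + a) (p + q) (p + q + a)

/-- The down-pointing lattice triangle (lobe) of size `a` whose left vertex is `(p, q)`
(vertices `(p,q)`, `(p+a,q)`, `(p+a,q-a)`). -/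
def downLobe (a : ℕ) (p q : ℤ) : Set Tri :=
  hexSet p (p + a) (q - a) q (p + q) (p + q + a)

/-- Auxiliary function building a fern: the string of lobes of sizes `as`, lined up
along the horizontal lattice line through `(p,q)` starting at the point `(p,q)`,
alternately pointing up and down, the first one pointing up iff the flag is `true`. -/
def fernAux : Bool → List ℕ → ℤ → ℤ → Set Tri
  | _, [], _, _ => ∅
  | true, a :: rest, p, q => upLobe a p q ∪ fernAux false rest (p + a) q
  | false, a :: rest, p, q => downLobe a p q ∪ fernAux true rest (p + a) q

/-- The fern `F(a₁, …, aₘ)` with base point `(p, q)`: a string of lattice triangles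
of sizes `a₁, …, aₘ` lined up along a horizontal lattice line, touching at their
vertices, alternately pointing up and down, the leftmost one pointing up. -/
def fern (as : List ℕ) (p q : ℤ) : Set Tri := fernAux true as p q

mutual
  /-- Sum of the entries in odd positions (1st, 3rd, 5th, …) of a list. -/
  def sumOdd : List ℕ → ℕ
    | [] => 0
    | a :: rest => a + sumEven rest
  /-- Sum of the entries in even positions (2nd, 4th, 6th, …) of a list. -/
  def sumEven : List ℕ → ℕ
    | [] => 0
    | _ :: rest => sumOdd rest
end

/-- The fern-cored hexagon `FC_{x,y,z}(a₁,…,aₘ)`: with `o = a₁+a₃+⋯` and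
`e = a₂+a₄+⋯`, the hexagon `H` of side-lengths `x+e, y+o, z+e, x+o, y+e, z+o`
(clockwise from top; top-left vertex of the top side placed at the origin),
minus the fern `F(a₁,…,aₘ)` based at the center of the auxiliary hexagon `H̄`
of side-lengths `x, y, z, x, y, z` fitting in the western corner of `H`
(shifted by half a unit left, resp. in polar direction `-2π/3`, resp. `2π/3`,
when `x`, resp. `z`, resp. `y` has parity opposite to the other two). -/
def FC (x y z : ℕ) (as : List ℕ) : Set Tri :=
  hexSet 0 ((x : ℤ) + sumEven as + y + sumOdd as)
      (-(y : ℤ) - sumOdd as - z - sumEven as) 0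
      (-(z : ℤ) - sumOdd as) ((x : ℤ) + sumEven as) \
    fern as (((x + y) / 2 : ℕ) : ℤ)
      (-(sumOdd as : ℤ) -
        (if (x + y) % 2 = 0 then (((y + z + 1) / 2 : ℕ) : ℤ) else (((y + z) / 2 : ℕ) : ℤ)))

/-- The number of centrally symmetric lozenge tilings of `FC x y z as`
(the center of the hexagon `H` has doubled coordinates
`(x+y+o+e, -(y+z+o+e))`). -/
noncomputable def McFC (x y z : ℕ) (as : List ℕ) : ℕ :=
  Msym (FC x y z as) ((x : ℤ) + y + (as.sum : ℤ)) (-((y : ℤ) + z + (as.sum : ℤ)))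

/-- The region `FC'_{x,y,z}(a₁,…,a_k,a_k,…,a₁)` (here `as = (a₁,…,a_k)` and
`a = a₁+⋯+a_k`): the hexagon of side-lengths `x+a+1, y+a, z+a, x+a+1, y+a, z+a`
(clockwise from top), minus the fern `F(a₁,…,a_k)` based at the center of the
auxiliary hexagon of side-lengths `x, y, z, x, y, z` in its western corner,
and minus the image of this fern under the 180° rotation about the center of
the big hexagon. -/
def FC' (x y z : ℤ) (as : List ℕ) : Set Tri :=
  hexSet 0 (x + y + 2 * (as.sum : ℤ) + 1) (-(y + z + 2 * (as.sum : ℤ))) 0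
      (-z - (as.sum : ℤ)) (x + (as.sum : ℤ) + 1) \
    (fern as ((x + y) / 2) (-(as.sum : ℤ) - (y + z) / 2) ∪
      rot (x + y + 2 * (as.sum : ℤ) + 1) (-(y + z + 2 * (as.sum : ℤ))) ''
        fern as ((x + y) / 2) (-(as.sum : ℤ) - (y + z) / 2))

/-- The number of centrally symmetric lozenge tilings of `FC' x y z as`. -/
noncomputable def McFC' (x y z : ℤ) (as : List ℕ) : ℕ :=
  Msym (FC' x y z as) (x + y + 2 * (as.sum : ℤ) + 1) (-(y + z + 2 * (as.sum : ℤ)))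

/-- The up-pointing unit triangles removed from along the base of the dented
semihexagon: starting at offset `p`, a block of `b₁` removed triangles, then a
gap of length `b₂`, then `b₃` removed triangles, and so on. -/
def dents : List ℕ → ℤ → Set Tri
  | [], _ => ∅
  | [b], p => {t : Tri | t.2.2 = true ∧ t.2.1 = 0 ∧ p ≤ t.1 ∧ t.1 < p + (b : ℤ)}
  | b :: c :: rest, p =>
      {t : Tri | t.2.2 = true ∧ t.2.1 = 0 ∧ p ≤ t.1 ∧ t.1 < p + (b : ℤ)} ∪
        dents rest (p + b + c)

/-- The dented semihexagon `S(b₁,…,b_l)`: the trapezoid of side-lengths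
`b₂+b₄+⋯`, `b₁+b₃+⋯`, `b₁+⋯+b_l`, `b₁+b₃+⋯` (clockwise from top), with the
leftmost `b₁` up-pointing unit triangles on its base removed, the next segment
of length `b₂` intact, the following `b₃` removed, and so on. -/
def S (bs : List ℕ) : Set Tri :=
  hexSet 0 (bs.sum : ℤ) 0 (sumOdd bs : ℤ) 0 (bs.sum : ℤ) \ dents bs 0

/-- `sC bs = s(b₁,…,b_l)`, the number of lozenge tilings of `S(b₁,…,b_l)`. -/
noncomputable def sC (bs : List ℕ) : ℕ := M (S bs)

/-- The hyperfactorial `h(n) = 0! · 1! ⋯ (n-1)!`. -/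
def hf (n : ℕ) : ℕ := ∏ i ∈ Finset.range n, Nat.factorial i

/-- The hyperfactorial of an integer (of its non-negative part). -/
def hfz (n : ℤ) : ℕ := hf n.toNat

/-- The list `(a 1, a 2, …, a k)`. -/
def mkList (k : ℕ) (a : ℕ → ℕ) : List ℕ := (List.range k).map fun i => a (i + 1)


private lemma sumOdd_add_sumEven : ∀ l : List ℕ, sumOdd l + sumEven l = l.sum := by
  intro l
  induction l with
  | nil => simp [sumOdd, sumEven]
  | cons a rest ih =>
    rw [sumOdd, sumEven, List.sum_cons, ← ih]
    omega

private lemma sumOdd_sumEven_append : ∀ (l1 l2 : List ℕ),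
    (sumOdd (l1 ++ l2) = sumOdd l1 + if Even l1.length then sumOdd l2 else sumEven l2) ∧
    (sumEven (l1 ++ l2) = sumEven l1 + if Even l1.length then sumEven l2 else sumOdd l2) := by
  intro l1
  induction l1 with
  | nil => intro l2; simp [sumOdd, sumEven]
  | cons a rest ih =>
    intro l2
    obtain ⟨h1, h2⟩ := ih l2
    rw [List.cons_append, sumOdd, sumEven, sumOdd, sumEven, h1, h2]
    by_cases h : Even rest.length <;> simp [Nat.even_add_one, h] <;> omega

private lemma sumOdd_sumEven_reverse : ∀ l : List ℕ,
    (sumOdd l.reverse = if Even l.length then sumEven l else sumOdd l) ∧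
    (sumEven l.reverse = if Even l.length then sumOdd l else sumEven l) := by
  intro l
  induction l with
  | nil => simp [sumOdd, sumEven]
  | cons a rest ih =>
    obtain ⟨h1, h2⟩ := ih
    constructor
    · rw [List.reverse_cons, (sumOdd_sumEven_append rest.reverse [a]).1, h1, List.length_reverse]
      by_cases h : Even rest.length <;> simp [h, Nat.even_add_one, sumOdd, sumEven] <;> omega
    · rw [List.reverse_cons, (sumOdd_sumEven_append rest.reverse [a]).2, h2, List.length_reverse]
      by_cases h : Even rest.length <;> simp [h, Nat.even_add_one, sumOdd, sumEven] <;> omega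

private lemma sumOdd_palindrome (l : List ℕ) : sumOdd (l ++ l.reverse) = l.sum := by
  obtain ⟨h1, -⟩ := sumOdd_sumEven_append l l.reverse
  obtain ⟨h3, h4⟩ := sumOdd_sumEven_reverse l
  rw [h1, ← sumOdd_add_sumEven l]
  by_cases h : Even l.length <;> simp [h] at h3 h4 ⊢ <;> omega

private lemma sumEven_palindrome (l : List ℕ) : sumEven (l ++ l.reverse) = l.sum := by
  obtain ⟨-, h2⟩ := sumOdd_sumEven_append l l.reverse
  obtain ⟨h3, h4⟩ := sumOdd_sumEven_reverse l
  rw [h2, ← sumOdd_add_sumEven l]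
  by_cases h : Even l.length <;> simp [h] at h3 h4 ⊢ <;> omega

private lemma rot_rot (cu cv : ℤ) (t : Tri) : rot cu cv (rot cu cv t) = t := by
  obtain ⟨u, v, b⟩ := t
  simp only [rot, Bool.not_not, Prod.mk.injEq]
  refine ⟨by omega, by omega, trivial⟩

private lemma adj_irrefl (t : Tri) : ¬ Adj t t := by
  rintro (⟨h1, h2, -⟩ | ⟨h1, h2, -⟩) <;> rw [h1] at h2 <;> simp at h2

private lemma no_adj_rot (m mv : ℤ) (t : Tri) : ¬ Adj t (rot (2 * m) (2 * mv) t) := by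
  obtain ⟨u, v, b⟩ := t
  rintro (⟨h1, h2, h3⟩ | ⟨h1, h2, h3⟩) <;>
    simp only [rot] at h1 h2 h3 <;>
    omega

end Fern

open Fern


open Classical in
private lemma even_ncard_of_invol {α : Type*} (f : α → α) :
    ∀ s : Finset α, (∀ t ∈ s, f t ∈ s) → (∀ t ∈ s, f (f t) = t) → (∀ t ∈ s, f t ≠ t) →
      Even s.card := by
  intro s
  induction s using Finset.strongInduction with
  | _ s ih =>
    intro hmem hinv hne
    rcases s.eq_empty_or_nonempty with rfl | ⟨t, ht⟩
    · simp
    · have hft : f t ∈ s := hmem t ht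
      have hne' : f t ≠ t := hne t ht
      set s' : Finset α := (s.erase t).erase (f t) with hs'
      have hsub : s' ⊆ s := (Finset.erase_subset _ _).trans (Finset.erase_subset _ _)
      have hts' : t ∉ s' := by simp [hs']
      have hfts' : f t ∉ s' := by simp [hs']
      have hmem' : ∀ u ∈ s', u ∈ s := fun u hu => hsub hu
      have key : ∀ u ∈ s', f u ∈ s' := by
        intro u hu
        have hu' : u ∈ s := hsub hu
        have h1 : u ≠ t := by rintro rfl; exact hts' hu
        have h2 : u ≠ f t := by rintro rfl; exact hfts' hu
        have hfu : f u ∈ s := hmem u hu'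
        have hfu1 : f u ≠ f t := by
          intro h; apply h1; have := congrArg f h; rwa [hinv u hu', hinv t ht] at this
        have hfu2 : f u ≠ t := by
          intro h; apply h2; rw [← h, hinv u hu']
        simp [hs', Finset.mem_erase, hfu1, hfu2, hfu]
      have hcard : s.card = s'.card + 2 := by
        have h1 : (s.erase t).card = s.card - 1 := Finset.card_erase_of_mem ht
        have h2 : s'.card = (s.erase t).card - 1 :=
          Finset.card_erase_of_mem (Finset.mem_erase.mpr ⟨hne', hft⟩)
        have : 1 ≤ s.card := Finset.card_pos.mpr ⟨t, ht⟩
        have : 2 ≤ s.card := by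
          have : ({t, f t} : Finset α) ⊆ s := by
            intro u hu; simp at hu; rcases hu with rfl | rfl <;> assumption
          calc 2 = ({t, f t} : Finset α).card := by rw [Finset.card_insert_of_notMem (by simpa using fun h => hne' h.symm), Finset.card_singleton]
            _ ≤ s.card := Finset.card_le_card this
        omega
      have hss : s' ⊂ s := Finset.ssubset_iff_of_subset hsub |>.mpr ⟨t, ht, hts'⟩
      have hev := ih s' hss key (fun u hu => hinv u (hsub hu)) (fun u hu => hne u (hsub hu))
      rw [hcard]
      rcases hev with ⟨m, hm⟩
      exact ⟨m + 1, by omega⟩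

private lemma even_ncard_invol {α : Type*} {s : Set α} (hs : s.Finite) (f : α → α)
    (hmem : ∀ t ∈ s, f t ∈ s) (hinv : ∀ t ∈ s, f (f t) = t) (hne : ∀ t ∈ s, f t ≠ t) :
    Even s.ncard := by
  classical
  haveI := hs.fintype
  rw [Set.ncard_eq_toFinset_card']
  exact even_ncard_of_invol f _ (by simpa using hmem) (by simpa using hinv) (by simpa using hne)

private lemma ncard_mod_two_invol {α : Type*} {s : Set α} (hs : s.Finite) (f : α → α)
    (hinv : ∀ t, f (f t) = t) (hne : ∀ t, f t ≠ t) :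
    s.ncard % 2 = {t ∈ s | f t ∉ s}.ncard % 2 := by
  classical
  have hsplit : s = {t ∈ s | f t ∈ s} ∪ {t ∈ s | f t ∉ s} := by
    ext t; by_cases h : f t ∈ s <;> simp [h]
  have h1 : ({t ∈ s | f t ∈ s}).Finite := hs.subset (fun t ht => ht.1)
  have h2 : ({t ∈ s | f t ∉ s}).Finite := hs.subset (fun t ht => ht.1)
  have hd : Disjoint {t ∈ s | f t ∈ s} {t ∈ s | f t ∉ s} := by
    rw [Set.disjoint_left]; rintro t ⟨_, h⟩ ⟨_, h'⟩; exact h' h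
  have heven : Even ({t ∈ s | f t ∈ s}).ncard := by
    apply even_ncard_invol h1 f
    · rintro t ⟨ht, hft⟩; exact ⟨hft, by rw [hinv]; exact ht⟩
    · intro t _; exact hinv t
    · intro t _; exact hne t
  have hu := Set.ncard_union_eq hd h1 h2
  rw [← hsplit] at hu
  rw [hu]
  rcases heven with ⟨m, hm⟩
  omega

namespace Fern

/-- flip the orientation of a triangle -/
private def flp (t : Tri) : Tri := (t.1, t.2.1, !t.2.2)

private lemma flp_flp (t : Tri) : flp (flp t) = t := by
  obtain ⟨u, v, b⟩ := t; simp [flp]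

private lemma flp_ne (t : Tri) : flp t ≠ t := by
  obtain ⟨u, v, b⟩ := t; simp [flp]

private lemma hexSet_finite (umin umax vmin vmax wmin wmax : ℤ) :
    (hexSet umin umax vmin vmax wmin wmax).Finite := by
  apply Set.Finite.subset
    (((Set.finite_Icc umin umax).prod ((Set.finite_Icc vmin vmax).prod
      (Set.finite_univ (α := Bool)))))
  rintro ⟨u, v, b⟩ ⟨h1, h2, h3, h4, h5⟩
  exact ⟨⟨by omega, by omega⟩, ⟨by omega, by omega⟩, trivial⟩

private lemma ncard_diag (bb : Bool) (w lo hi : ℤ) :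
    ({t : Tri | t.2.2 = bb ∧ t.1 + t.2.1 = w ∧ lo ≤ t.1 ∧ t.1 ≤ hi}).ncard
      = (hi + 1 - lo).toNat := by
  have himg : {t : Tri | t.2.2 = bb ∧ t.1 + t.2.1 = w ∧ lo ≤ t.1 ∧ t.1 ≤ hi}
      = (fun u => (u, w - u, bb)) '' ↑(Finset.Icc lo hi) := by
    ext ⟨u, v, b⟩
    simp only [Set.mem_setOf_eq, Set.mem_image, Finset.coe_Icc, Set.mem_Icc, Prod.mk.injEq]
    constructor
    · rintro ⟨rfl, hw, h1, h2⟩; exact ⟨u, ⟨h1, h2⟩, rfl, by omega, rfl⟩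
    · rintro ⟨u', ⟨h1, h2⟩, rfl, rfl, rfl⟩; exact ⟨rfl, by omega, h1, h2⟩
  rw [himg, Set.ncard_image_of_injective _ (fun a b h => congrArg Prod.fst h),
    Set.ncard_coe_finset, Int.card_Icc]

private lemma diag_finite (bb : Bool) (w lo hi : ℤ) :
    ({t : Tri | t.2.2 = bb ∧ t.1 + t.2.1 = w ∧ lo ≤ t.1 ∧ t.1 ≤ hi}).Finite := by
  apply Set.Finite.subset (((Set.finite_Icc lo hi).prod ((Set.finite_Icc (w - hi) (w - lo)).prod
    (Set.finite_univ (α := Bool)))))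
  rintro ⟨u, v, b⟩ ⟨h1, h2, h3, h4⟩
  exact ⟨⟨h3, h4⟩, ⟨by omega, by omega⟩, trivial⟩

private lemma ncard_upLobe_mod (a : ℕ) (p q : ℤ) :
    (upLobe a p q).ncard % 2 = a % 2 := by
  rw [ncard_mod_two_invol (s := upLobe a p q) (hexSet_finite _ _ _ _ _ _) flp flp_flp flp_ne]
  have : {t ∈ upLobe a p q | flp t ∉ upLobe a p q}
      = {t : Tri | t.2.2 = true ∧ t.1 + t.2.1 = p + q + a - 1 ∧ p ≤ t.1 ∧ t.1 ≤ p + a - 1} := by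
    ext ⟨u, v, b⟩
    cases b <;>
      simp only [Set.mem_setOf_eq, upLobe, hexSet, flp, Bool.not_true, Bool.not_false,
        if_true, if_false, reduceIte, Bool.false_eq_true, Bool.true_eq_false,
        false_and, true_and, and_true, and_false, not_and, not_le, iff_false, not_false_iff] <;>
      omega
  rw [this, ncard_diag]
  omega

private lemma ncard_downLobe_mod (a : ℕ) (p q : ℤ) :
    (downLobe a p q).ncard % 2 = a % 2 := by
  rw [ncard_mod_two_invol (s := downLobe a p q) (hexSet_finite _ _ _ _ _ _) flp flp_flp flp_ne]
  have : {t ∈ downLobe a p q | flp t ∉ downLobe a p q}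
      = {t : Tri | t.2.2 = false ∧ t.1 + t.2.1 = p + q - 1 ∧ p ≤ t.1 ∧ t.1 ≤ p + a - 1} := by
    ext ⟨u, v, b⟩
    cases b <;>
      simp only [Set.mem_setOf_eq, downLobe, hexSet, flp, Bool.not_true, Bool.not_false,
        if_true, if_false, reduceIte, Bool.false_eq_true, Bool.true_eq_false,
        false_and, true_and, and_true, and_false, not_and, not_le, iff_false, not_false_iff] <;>
      omega
  rw [this, ncard_diag]
  omega

private lemma upLobe_finite (a : ℕ) (p q : ℤ) : (upLobe a p q).Finite :=
  hexSet_finite _ _ _ _ _ _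

private lemma downLobe_finite (a : ℕ) (p q : ℤ) : (downLobe a p q).Finite :=
  hexSet_finite _ _ _ _ _ _

private lemma fernAux_finite : ∀ (l : List ℕ) (b : Bool) (p q : ℤ),
    (fernAux b l p q).Finite := by
  intro l
  induction l with
  | nil => intro b p q; cases b <;> exact Set.finite_empty
  | cons a rest ih =>
    intro b p q
    cases b
    · exact (downLobe_finite a p q).union (ih true (p + a) q)
    · exact (upLobe_finite a p q).union (ih false (p + a) q)

private lemma fernAux_subset_ge : ∀ (l : List ℕ) (b : Bool) (p q : ℤ),
    fernAux b l p q ⊆ {t : Tri | p ≤ t.1} := by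
  intro l
  induction l with
  | nil => intro b p q; cases b <;> simp [fernAux]
  | cons a rest ih =>
    intro b p q
    have hrest : fernAux (!b) rest (p + a) q ⊆ {t : Tri | p ≤ t.1} := by
      intro t ht
      have := ih (!b) (p + a) q ht
      simp only [Set.mem_setOf_eq] at this ⊢
      omega
    cases b
    · exact Set.union_subset (fun t ht => ht.1) (by simpa using hrest)
    · exact Set.union_subset (fun t ht => ht.1) (by simpa using hrest)

private lemma fernAux_subset_lt : ∀ (l : List ℕ) (b : Bool) (p q : ℤ),
    fernAux b l p q ⊆ {t : Tri | t.1 < p + l.sum} := by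
  intro l
  induction l with
  | nil => intro b p q; cases b <;> simp [fernAux]
  | cons a rest ih =>
    intro b p q
    have hsum : ((a :: rest).sum : ℤ) = (a : ℤ) + rest.sum := by
      push_cast [List.sum_cons]; ring
    have hrest : fernAux (!b) rest (p + a) q ⊆ {t : Tri | t.1 < p + (a :: rest).sum} := by
      intro t ht
      have := ih (!b) (p + a) q ht
      simp only [Set.mem_setOf_eq] at this ⊢
      omega
    have hlobe : ∀ t : Tri, (t ∈ upLobe a p q ∨ t ∈ downLobe a p q) →
        t.1 < p + ((a :: rest).sum : ℤ) := by
      rintro t (ht | ht) <;>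
      · have h2 : t.1 + 1 ≤ p + a := ht.2.1
        have : (rest.sum : ℤ) ≥ 0 := by positivity
        omega
    cases b
    · exact Set.union_subset (fun t ht => hlobe t (Or.inr ht)) (by simpa using hrest)
    · exact Set.union_subset (fun t ht => hlobe t (Or.inl ht)) (by simpa using hrest)

private lemma fernAux_append (l2 : List ℕ) (q : ℤ) :
    ∀ (l1 : List ℕ) (b : Bool) (p : ℤ), ∃ b', fernAux b (l1 ++ l2) p q
      = fernAux b l1 p q ∪ fernAux b' l2 (p + l1.sum) q := by
  intro l1
  induction l1 with
  | nil =>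
    intro b p
    exact ⟨b, by cases b <;> simp [fernAux]⟩
  | cons a rest ih =>
    intro b p
    have hcast : p + ((a :: rest).sum : ℤ) = (p + a) + (rest.sum : ℤ) := by
      push_cast [List.sum_cons]; ring
    cases b
    · obtain ⟨b', hb'⟩ := ih true (p + a)
      exact ⟨b', by simp only [fernAux, List.cons_append, List.append_eq, hb', Set.union_assoc, hcast]⟩
    · obtain ⟨b', hb'⟩ := ih false (p + a)
      exact ⟨b', by simp only [fernAux, List.cons_append, List.append_eq, hb', Set.union_assoc, hcast]⟩

private lemma fernAux_ncard_mod : ∀ (l : List ℕ) (b : Bool) (p q : ℤ),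
    (fernAux b l p q).ncard % 2 = l.sum % 2 := by
  intro l
  induction l with
  | nil => intro b p q; cases b <;> simp [fernAux]
  | cons a rest ih =>
    intro b p q
    have hdisj : ∀ (s : Set Tri) (b2 : Bool), s ⊆ hexSet p (p + a) (q - a) q (p+q) (p+q+a) ∪
        hexSet p (p + a) q (q + a) (p+q) (p+q+a) →
        Disjoint s (fernAux b2 rest (p + a) q) := by
      intro s b2 hs
      rw [Set.disjoint_left]
      intro t hts htf
      have h1 := fernAux_subset_ge rest b2 (p + a) q htf
      rcases hs hts with h | h <;>
      · have := h.2.1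
        simp only [Set.mem_setOf_eq] at h1
        omega
    have hsum : (a :: rest).sum = a + rest.sum := List.sum_cons
    cases b
    · rw [show fernAux false (a :: rest) p q = downLobe a p q ∪ fernAux true rest (p + a) q
        from rfl]
      rw [Set.ncard_union_eq (hdisj _ _ (by rw [downLobe]; exact Set.subset_union_left))
        (downLobe_finite a p q) (fernAux_finite rest true (p + a) q)]
      have h1 := ncard_downLobe_mod a p q
      have h2 := ih true (p + a) q
      omega
    · rw [show fernAux true (a :: rest) p q = upLobe a p q ∪ fernAux false rest (p + a) q
        from rfl]
      rw [Set.ncard_union_eq (hdisj _ _ (by rw [upLobe]; exact Set.subset_union_right))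
        (upLobe_finite a p q) (fernAux_finite rest false (p + a) q)]
      have h1 := ncard_upLobe_mod a p q
      have h2 := ih false (p + a) q
      omega

end Fern

/-- If `x, y, z` are odd (positive) integers, the centrally symmetric fern-cored
hexagon `FC_{x,y,z}(a₁,…,a_k,a_k,…,a₁)` has no centrally symmetric lozenge
tilings: `x`, `y` and `z` must be even for such tilings to exist. -/
theorem McFC_eq_zero_of_odd (x y z : ℕ) (hx : Odd x) (hy : Odd y) (hz : Odd z)
    (k : ℕ) (a : ℕ → ℕ) :
    McFC x y z (mkList k a ++ (mkList k a).reverse) = 0 := by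
  classical
  obtain ⟨x', hx'⟩ := hx
  obtain ⟨y', hy'⟩ := hy
  obtain ⟨z', hz'⟩ := hz
  set l : List ℕ := mkList k a with hl
  set as : List ℕ := l ++ l.reverse with has
  set N : ℕ := l.sum with hN
  have hassum : as.sum = 2 * N := by
    rw [has, List.sum_append, List.sum_reverse]; omega
  have hodd : sumOdd as = N := sumOdd_palindrome l
  have heven : sumEven as = N := sumEven_palindrome l
  set P : ℕ := (x + y) / 2 with hPdef
  have hP : 2 * P = x + y := by omega
  set Q : ℕ := (y + z + 1) / 2 with hQdef
  have hQ : 2 * Q = y + z := by omega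
  have hxy : (x + y) % 2 = 0 := by omega
  set pI : ℤ := (P : ℤ) with hpI
  set qI : ℤ := -(N : ℤ) - (Q : ℤ) with hqI
  set cI : ℤ := (P : ℤ) + (N : ℤ) with hcI
  set Hx : Set Tri := hexSet 0 ((x : ℤ) + N + y + N) (-(y : ℤ) - N - z - N) 0
      (-(z : ℤ) - N) ((x : ℤ) + N) with hHx
  have hFC : FC x y z as = Hx \ fern as pI qI := by
    rw [FC, hodd, heven, if_pos hxy]
  set R : Set Tri := FC x y z as with hR
  set cu : ℤ := (x : ℤ) + y + (as.sum : ℤ) with hcu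
  set cv : ℤ := -((y : ℤ) + z + (as.sum : ℤ)) with hcv
  have hcu2 : cu = 2 * cI := by rw [hcu, hcI, hassum]; push_cast; omega
  set mv : ℤ := -(Q : ℤ) - N with hmv
  have hcv2 : cv = 2 * mv := by rw [hcv, hmv, hassum]; push_cast; omega
  set F1 : Set Tri := fernAux true l pI qI with hF1
  set L : Set Tri := {t : Tri | t ∈ R ∧ t.1 < cI} with hL
  set HL : Set Tri := {t : Tri | t ∈ Hx ∧ t.1 < cI} with hHL
  have hHxfin : Hx.Finite := hexSet_finite _ _ _ _ _ _
  have hHLfin : HL.Finite := hHxfin.subset (fun t ht => ht.1)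
  -- the fern splits in two halves
  obtain ⟨b2, hb2⟩ := fernAux_append l.reverse qI l true pI
  have hfernsplit : fern as pI qI = F1 ∪ fernAux b2 l.reverse (pI + N) qI := by
    rw [fern, has, hb2, hN]
  have hF2sub : fernAux b2 l.reverse (pI + N) qI ⊆ {t : Tri | pI + N ≤ t.1} :=
    fernAux_subset_ge _ _ _ _
  -- the first half of the fern lies in the left half of the hexagon
  have haux : ∀ (l' : List ℕ) (b : Bool) (p' : ℤ), pI ≤ p' → p' + l'.sum ≤ pI + N →
      fernAux b l' p' qI ⊆ HL := by
    intro l'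
    induction l' with
    | nil => intro b p' _ _; cases b <;> simp [fernAux]
    | cons a0 rest ih =>
      intro b p' h1 h2
      have hsums : ((a0 :: rest).sum : ℤ) = (a0 : ℤ) + rest.sum := by
        push_cast [List.sum_cons]; ring
      have hrs : (0:ℤ) ≤ (rest.sum : ℤ) := by positivity
      have hrest : fernAux (!b) rest (p' + a0) qI ⊆ HL := by
        apply ih
        · omega
        · omega
      have hup : upLobe a0 p' qI ⊆ HL := by
        rintro ⟨u, v, bb⟩ ht
        cases bb <;>
          simp only [hHL, hHx, upLobe, hexSet, Set.mem_setOf_eq, reduceIte,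
            Bool.false_eq_true, if_true, if_false] at ht ⊢ <;>
          omega
      have hdown : downLobe a0 p' qI ⊆ HL := by
        rintro ⟨u, v, bb⟩ ht
        cases bb <;>
          simp only [hHL, hHx, downLobe, hexSet, Set.mem_setOf_eq, reduceIte,
            Bool.false_eq_true, if_true, if_false] at ht ⊢ <;>
          omega
      cases b
      · exact Set.union_subset hdown hrest
      · exact Set.union_subset hup hrest
  have hF1sub : F1 ⊆ HL := haux l true pI le_rfl (by rw [← hN])
  -- left half of the region
  have hLeq : L = HL \ F1 := by
    have hRmem : ∀ t : Tri, t ∈ R ↔ t ∈ Hx ∧ t ∉ fern as pI qI := by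
      intro t; rw [hFC]; exact Iff.rfl
    ext t
    simp only [hL, hHL, Set.mem_setOf_eq, Set.mem_diff]
    rw [hRmem t, hfernsplit]
    simp only [Set.mem_union]
    constructor
    · rintro ⟨⟨h1, h2⟩, h3⟩
      exact ⟨⟨h1, h3⟩, fun hc => h2 (Or.inl hc)⟩
    · rintro ⟨⟨h1, h3⟩, h2⟩
      refine ⟨⟨h1, ?_⟩, h3⟩
      rintro (hc | hc)
      · exact h2 hc
      · have := hF2sub hc
        simp only [Set.mem_setOf_eq] at this
        omega
  -- parity of the left half of the hexagon
  have hHLcard : HL.ncard % 2 = (y + N) % 2 := by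
    rw [ncard_mod_two_invol hHLfin flp flp_flp flp_ne]
    have hsplit2 : {t ∈ HL | flp t ∉ HL} =
        {t : Tri | t.2.2 = true ∧ t.1 + t.2.1 = ((x : ℤ) + N) - 1 ∧
          (x : ℤ) + N ≤ t.1 ∧ t.1 ≤ cI - 1} ∪
        {t : Tri | t.2.2 = false ∧ t.1 + t.2.1 = (-(z : ℤ) - N) - 1 ∧
          0 ≤ t.1 ∧ t.1 ≤ min (cI - 1) ((y : ℤ) + N - 1)} := by
      ext ⟨u, v, bb⟩
      cases bb <;>
        simp only [hHL, hHx, hexSet, flp, Set.mem_setOf_eq, Set.mem_union, reduceIte,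
          Bool.false_eq_true, Bool.true_eq_false, Bool.not_true, Bool.not_false,
          if_true, if_false, false_and, true_and, and_false, and_true, or_false,
          false_or, not_and, not_lt, not_le] <;>
        omega
    rw [hsplit2, Set.ncard_union_eq ?dd ?f1 ?f2]
    case dd =>
      rw [Set.disjoint_left]
      rintro ⟨u, v, bb⟩ h1 h2
      rw [Set.mem_setOf_eq] at h1 h2
      rw [h1.1] at h2
      simp at h2
    case f1 => exact diag_finite _ _ _ _
    case f2 => exact diag_finite _ _ _ _
    rw [ncard_diag, ncard_diag]
    omega
  have hF1card : F1.ncard % 2 = N % 2 := by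
    rw [hF1, fernAux_ncard_mod, hN]
  have hLcard : L.ncard % 2 = 1 := by
    have hle := Set.ncard_le_ncard hF1sub hHLfin
    rw [hLeq, Set.ncard_diff hF1sub (fernAux_finite l true pI qI)]
    omega
  have hLfin : L.Finite := (Set.Finite.diff hHLfin : (HL \ F1).Finite).subset (le_of_eq hLeq)
  -- now suppose we have a centrally symmetric tiling
  rw [McFC, Msym, Nat.card_eq_zero]
  left
  constructor
  rintro ⟨T, hT'⟩
  have hT : ∀ t ∈ R, T.mate (rot cu cv t) = rot cu cv (T.mate t) := hT'
  -- the region is closed under the rotation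
  have hrotR : ∀ t ∈ R, rot cu cv t ∈ R := by
    intro t ht
    by_contra hc
    have h1 := T.mate_eq_self _ hc
    have h2 := hT t ht
    rw [h1] at h2
    have h3 : T.mate t = t := by
      have h4 := congrArg (rot cu cv) h2
      rw [rot_rot, rot_rot] at h4
      exact h4.symm
    apply adj_irrefl t
    have h5 := T.adj_mate t ht
    rwa [h3] at h5
  set ψ : Tri → Tri := fun t => if T.mate t ∈ L then T.mate t else rot cu cv (T.mate t)
    with hψ
  have hrotu : ∀ t : Tri, (rot cu cv t).1 = 2 * cI - t.1 - 1 := by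
    intro t; rw [rot, hcu2]
  have hmem : ∀ t ∈ L, ψ t ∈ L := by
    intro t ht
    obtain ⟨htR, htlt⟩ := ht
    by_cases hm : T.mate t ∈ L
    · simpa [hψ, hm] using hm
    · simp only [hψ, hm, if_false]
      have hmR : T.mate t ∈ R := T.mate_mem t htR
      have hmge : cI ≤ (T.mate t).1 := by
        by_contra hcon
        exact hm ⟨hmR, by omega⟩
      refine ⟨hrotR _ hmR, ?_⟩
      rw [hrotu]
      omega
  have hinv : ∀ t ∈ L, ψ (ψ t) = t := by
    intro t ht
    obtain ⟨htR, htlt⟩ := ht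
    by_cases hm : T.mate t ∈ L
    · simp only [hψ, hm, if_true, T.mate_mate t htR, if_pos (show t ∈ L from ⟨htR, htlt⟩)]
    · simp only [hψ, hm, if_false]
      have hmR : T.mate t ∈ R := T.mate_mem t htR
      have hkey : T.mate (rot cu cv (T.mate t)) = rot cu cv t := by
        rw [hT _ hmR, T.mate_mate t htR]
      rw [hkey]
      have hnotL : rot cu cv t ∉ L := by
        rintro ⟨-, hlt2⟩
        rw [hrotu] at hlt2
        omega
      rw [if_neg hnotL, rot_rot]
  have hne : ∀ t ∈ L, ψ t ≠ t := by
    intro t ht heq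
    obtain ⟨htR, htlt⟩ := ht
    by_cases hm : T.mate t ∈ L
    · simp only [hψ, hm, if_true] at heq
      apply adj_irrefl t
      have h5 := T.adj_mate t htR
      rwa [heq] at h5
    · simp only [hψ, hm, if_false] at heq
      have hmrot : T.mate t = rot cu cv t := by
        have h5 := congrArg (rot cu cv) heq
        rwa [rot_rot] at h5
      have hadj := T.adj_mate t htR
      rw [hmrot, hcu2, hcv2] at hadj
      exact no_adj_rot cI mv t hadj
  have heven := even_ncard_invol hLfin ψ hmem hinv hne
  rw [Nat.even_iff] at heven
  omega
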